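/- For all integers n ≥ 1 and 0 ≤ k ≤ n, the cyclic (n,k)-matrix M_{n,k} is k-uniform and optimal. -/

import Mathlib

/-- `M` is a binary (0/1) matrix. -/
def IsBinary {n : ℕ} (M : Fin n → Fin n → ℕ) : Prop :=
  ∀ i j, M i j = 0 ∨ M i j = 1

/-- Every row and every column of `M` contains exactly `k` entries equal to `1`. -/
def IsUniform {n : ℕ} (k : ℕ) (M : Fin n → Fin n → ℕ) : Prop :=
  (∀ i, (Finset.univ.filter fun j => M i j = 1).card = k) ∧
  (∀ j, (Finset.univ.filter fun i => M i j = 1).card = k)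

/-- Partial row sum `S_{i,j}`: sum of the entries of row `i` in columns `≤ j`. -/
def RowSum {n : ℕ} (M : Fin n → Fin n → ℕ) (i j : Fin n) : ℕ :=
  ∑ l ∈ Finset.Iic j, M i l

/-- An assignment mapping between columns `j` and `j'`: a bijection from
`{i : M i j = 1}` onto `{i : M i j' = 1}`. -/
def IsAssignment {n : ℕ} (M : Fin n → Fin n → ℕ) (j j' : Fin n) (φ : Fin n → Fin n) : Prop :=
  Set.BijOn φ {i | M i j = 1} {i | M i j' = 1}

/-- Condition (2): `S_{φ(i),j} ≤ S_{i,j}` for all `i` in the domain. -/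
def Cond2 {n : ℕ} (M : Fin n → Fin n → ℕ) (j : Fin n) (φ : Fin n → Fin n) : Prop :=
  ∀ i, M i j = 1 → RowSum M (φ i) j ≤ RowSum M i j

/-- Condition (1): `φ(i) = i` exactly when `m_{i,j} = m_{i,j'} = 1`. -/
def Cond1 {n : ℕ} (M : Fin n → Fin n → ℕ) (j j' : Fin n) (φ : Fin n → Fin n) : Prop :=
  ∀ i, M i j = 1 → (φ i = i ↔ (M i j = 1 ∧ M i j' = 1))

/-- `M` is optimal: it is `k`-uniform for some `k`, and between each pair of consecutive
columns there is an assignment mapping satisfying Condition (2). -/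
def Optimal {n : ℕ} (M : Fin n → Fin n → ℕ) : Prop :=
  (∃ k, IsUniform k M) ∧
  ∀ j : ℕ, ∀ hj : j + 1 < n, ∃ φ : Fin n → Fin n,
    IsAssignment M ⟨j, Nat.lt_of_succ_lt hj⟩ ⟨j + 1, hj⟩ φ ∧
    Cond2 M ⟨j, Nat.lt_of_succ_lt hj⟩ φ

open scoped Classical in
/-- The cyclic `(n,k)`-matrix: the `(i,j)` entry equals `1` iff
`j ≡ ik + a (mod n)` for some `0 ≤ a ≤ k − 1`. -/
noncomputable def cyc (n k : ℕ) : Fin n → Fin n → ℕ := fun i j =>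
  if ∃ a < k, (j : ℕ) ≡ (i : ℕ) * k + a [MOD n] then 1 else 0

section Aux

variable {n k : ℕ} [NeZero n]

/-- Membership criterion in terms of `ZMod.val`. -/
lemma cycAux_mem_iff (hk : k ≤ n) (i l : Fin n) :
    (∃ a < k, (l : ℕ) ≡ (i : ℕ) * k + a [MOD n]) ↔
      (((l : ℕ) : ZMod n) - ((i : ℕ) : ZMod n) * (k : ZMod n)).val < k := by
  constructor
  · rintro ⟨a, ha, hmod⟩
    have h1 : ((l : ℕ) : ZMod n) = (((i : ℕ) * k + a : ℕ) : ZMod n) :=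
      (ZMod.natCast_eq_natCast_iff _ _ _).2 hmod
    push_cast at h1
    have h2 : ((l : ℕ) : ZMod n) - ((i : ℕ) : ZMod n) * (k : ZMod n) = (a : ZMod n) := by
      rw [h1]; ring
    rw [h2, ZMod.val_natCast_of_lt (lt_of_lt_of_le ha hk)]
    exact ha
  · intro h
    set x := ((l : ℕ) : ZMod n) - ((i : ℕ) : ZMod n) * (k : ZMod n) with hx
    refine ⟨x.val, h, ?_⟩
    have h1 : ((l : ℕ) : ZMod n) = (((i : ℕ) * k + x.val : ℕ) : ZMod n) := by
      push_cast
      rw [ZMod.natCast_rightInverse x, hx]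
      ring
    exact (ZMod.natCast_eq_natCast_iff _ _ _).1 h1

lemma cyc_eq_one_iff (hk : k ≤ n) (i l : Fin n) :
    cyc n k i l = 1 ↔ (((l : ℕ) : ZMod n) - ((i : ℕ) : ZMod n) * (k : ZMod n)).val < k := by
  classical
  unfold cyc
  split_ifs with h
  · simp [(cycAux_mem_iff hk i l).1 h]
  · simpa using (cycAux_mem_iff (n := n) hk i l).not.1 h

/-- Row uniformity. -/
lemma cyc_row_card (hk : k ≤ n) (i : Fin n) :
    (Finset.univ.filter fun j => cyc n k i j = 1).card = k := by
  classical
  have hfilter : (Finset.univ.filter fun j => cyc n k i j = 1)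
      = (Finset.univ.filter fun j : Fin n =>
        (((j : ℕ) : ZMod n) - ((i : ℕ) : ZMod n) * (k : ZMod n)).val < k) := by
    apply Finset.filter_congr
    intro l _
    simpa using cyc_eq_one_iff hk i l
  have hcard : (Finset.univ.filter fun j : Fin n =>
      (((j : ℕ) : ZMod n) - ((i : ℕ) : ZMod n) * (k : ZMod n)).val < k).card
      = (Finset.range k).card := by
    refine Finset.card_nbij'
      (i := fun l => (((l : ℕ) : ZMod n) - ((i : ℕ) : ZMod n) * (k : ZMod n)).val)
      (j := fun a => (⟨(((i : ℕ) : ZMod n) * (k : ZMod n) + (a : ZMod n)).val,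
        ZMod.val_lt _⟩ : Fin n)) ?_ ?_ ?_ ?_
    · intro l hl
      simp only [Finset.mem_coe, Finset.mem_filter] at hl
      simpa using hl.2
    · intro a ha
      simp only [Finset.mem_coe, Finset.mem_range] at ha
      simp only [Finset.mem_coe, Finset.mem_filter, Finset.mem_univ, true_and]
      have h1 : ((((((i : ℕ) : ZMod n) * (k : ZMod n) + (a : ZMod n)).val : ℕ)) : ZMod n)
          = ((i : ℕ) : ZMod n) * (k : ZMod n) + (a : ZMod n) := ZMod.natCast_rightInverse _
      rw [h1]
      have h2 : ((i : ℕ) : ZMod n) * (k : ZMod n) + (a : ZMod n)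
          - ((i : ℕ) : ZMod n) * (k : ZMod n) = (a : ZMod n) := by ring
      rw [h2, ZMod.val_natCast_of_lt (lt_of_lt_of_le ha hk)]
      exact ha
    · intro l hl
      apply Fin.ext
      simp only
      have h1 : (((((l : ℕ) : ZMod n) - ((i : ℕ) : ZMod n) * (k : ZMod n)).val : ℕ) : ZMod n)
          = ((l : ℕ) : ZMod n) - ((i : ℕ) : ZMod n) * (k : ZMod n) := ZMod.natCast_rightInverse _
      rw [h1]
      have h2 : ((i : ℕ) : ZMod n) * (k : ZMod n)
          + (((l : ℕ) : ZMod n) - ((i : ℕ) : ZMod n) * (k : ZMod n)) = ((l : ℕ) : ZMod n) := by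
        ring
      rw [h2, ZMod.val_natCast_of_lt l.isLt]
    · intro a ha
      simp only [Finset.mem_coe, Finset.mem_range] at ha
      have h1 : ((((((i : ℕ) : ZMod n) * (k : ZMod n) + (a : ZMod n)).val : ℕ)) : ZMod n)
          = ((i : ℕ) : ZMod n) * (k : ZMod n) + (a : ZMod n) := ZMod.natCast_rightInverse _
      simp only
      rw [h1]
      have h2 : ((i : ℕ) : ZMod n) * (k : ZMod n) + (a : ZMod n)
          - ((i : ℕ) : ZMod n) * (k : ZMod n) = (a : ZMod n) := by ring
      rw [h2, ZMod.val_natCast_of_lt (lt_of_lt_of_le ha hk)]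
  rw [hfilter, hcard, Finset.card_range]

/-- Column uniformity. -/
lemma cyc_col_card (hk : k ≤ n) (j : Fin n) :
    (Finset.univ.filter fun i => cyc n k i j = 1).card = k := by
  classical
  rcases Nat.eq_zero_or_pos k with hk0 | hk1
  · subst hk0
    have : (Finset.univ.filter fun i => cyc n 0 i j = 1) = ∅ := by
      apply Finset.filter_false_of_mem
      intro i _
      rw [cyc_eq_one_iff (Nat.zero_le n) i j]
      simp
    rw [this, Finset.card_empty]
  · have hfilter : (Finset.univ.filter fun i => cyc n k i j = 1)
        = (Finset.univ.filter fun i : Fin n =>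
          (((j : ℕ) : ZMod n) - ((i : ℕ) : ZMod n) * (k : ZMod n)).val < k) := by
      apply Finset.filter_congr
      intro i _
      simpa using cyc_eq_one_iff hk i j
    -- intermediate set : residues below `n*k` that are `j` mod `n`
    have hT : ((Finset.range (n * k)).filter fun m => m % n = (j : ℕ))
        = (Finset.range k).image fun a => (j : ℕ) + n * a := by
      ext m
      simp only [Finset.mem_filter, Finset.mem_range, Finset.mem_image]
      constructor
      · rintro ⟨hm, hmod⟩
        refine ⟨m / n, ?_, ?_⟩
        · exact Nat.div_lt_of_lt_mul hm
        · have h := Nat.div_add_mod m n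
          omega
      · rintro ⟨a, ha, rfl⟩
        constructor
        · have hjn : (j : ℕ) < n := j.isLt
          calc (j : ℕ) + n * a < n + n * a := by omega
            _ = n * (a + 1) := by ring
            _ ≤ n * k := Nat.mul_le_mul_left n (by omega)
        · rw [Nat.add_mul_mod_self_left, Nat.mod_eq_of_lt j.isLt]
    have hTcard : ((Finset.range (n * k)).filter fun m => m % n = (j : ℕ)).card = k := by
      rw [hT, Finset.card_image_of_injective _ (fun a b hab =>
        Nat.eq_of_mul_eq_mul_left (Nat.pos_of_ne_zero (NeZero.ne n)) (by omega : n * a = n * b)),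
        Finset.card_range]
    have hcard : (Finset.univ.filter fun i : Fin n =>
        (((j : ℕ) : ZMod n) - ((i : ℕ) : ZMod n) * (k : ZMod n)).val < k).card
        = ((Finset.range (n * k)).filter fun m => m % n = (j : ℕ)).card := by
      have hn0 : 0 < n := Nat.pos_of_ne_zero (NeZero.ne n)
      have hDval : ∀ m ∈ (Finset.range (n * k)).filter fun m => m % n = (j : ℕ),
          (((j : ℕ) : ZMod n) - (((m / k) % n : ℕ) : ZMod n) * (k : ZMod n)).val = m % k ∧
          (m / k) % n = m / k := by
        intro m hm
        simp only [Finset.mem_filter, Finset.mem_range] at hm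
        obtain ⟨hm1, hm2⟩ := hm
        have hdiv : m / k < n := Nat.div_lt_of_lt_mul (by rwa [mul_comm] at hm1)
        have hmodn : (m / k) % n = m / k := Nat.mod_eq_of_lt hdiv
        refine ⟨?_, hmodn⟩
        have hcm : ((m : ℕ) : ZMod n) = ((j : ℕ) : ZMod n) := by
          refine (ZMod.natCast_eq_natCast_iff _ _ _).2 ?_
          show m % n = (j : ℕ) % n
          rw [hm2, Nat.mod_eq_of_lt j.isLt]
        have hdm : k * (m / k) + m % k = m := Nat.div_add_mod m k
        have h3 : ((j : ℕ) : ZMod n) - (((m / k) % n : ℕ) : ZMod n) * (k : ZMod n)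
            = ((m % k : ℕ) : ZMod n) := by
          have h4 : ((m % k : ℕ) : ZMod n) + ((m / k : ℕ) : ZMod n) * (k : ZMod n)
              = ((j : ℕ) : ZMod n) := by
            rw [← hcm]
            conv_rhs => rw [← hdm]
            push_cast
            ring
          rw [hmodn, ← h4]
          ring
        rw [h3, ZMod.val_natCast_of_lt (lt_of_lt_of_le (Nat.mod_lt m hk1) hk)]
      refine Finset.card_nbij'
        (i := fun i => (i : ℕ) * k + (((j : ℕ) : ZMod n) - ((i : ℕ) : ZMod n) * (k : ZMod n)).val)
        (j := fun m => (⟨(m / k) % n, Nat.mod_lt _ hn0⟩ : Fin n)) ?_ ?_ ?_ ?_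
      · intro i hi
        simp only [Finset.mem_coe, Finset.mem_filter, Finset.mem_univ, true_and] at hi
        simp only [Finset.mem_coe, Finset.mem_filter, Finset.mem_range]
        constructor
        · calc (i : ℕ) * k + (((j : ℕ) : ZMod n) - ((i : ℕ) : ZMod n) * (k : ZMod n)).val
              < (i : ℕ) * k + k := by omega
            _ = ((i : ℕ) + 1) * k := by ring
            _ ≤ n * k := Nat.mul_le_mul_right k i.isLt
        · have hcast : (((i : ℕ) * k
              + (((j : ℕ) : ZMod n) - ((i : ℕ) : ZMod n) * (k : ZMod n)).val : ℕ) : ZMod n)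
              = ((j : ℕ) : ZMod n) := by
            push_cast
            rw [ZMod.natCast_rightInverse]
            ring
          have := (ZMod.natCast_eq_natCast_iff _ _ _).1 hcast
          have h2 : ((i : ℕ) * k
              + (((j : ℕ) : ZMod n) - ((i : ℕ) : ZMod n) * (k : ZMod n)).val) % n
              = (j : ℕ) % n := this
          rwa [Nat.mod_eq_of_lt j.isLt] at h2
      · intro m hm
        simp only [Finset.mem_coe, Finset.mem_filter, Finset.mem_univ, true_and]
        rw [(hDval m hm).1]
        exact lt_of_le_of_lt (Nat.le_refl _) (Nat.mod_lt m hk1)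
      · intro i hi
        simp only [Finset.mem_coe, Finset.mem_filter, Finset.mem_univ, true_and] at hi
        apply Fin.ext
        simp only
        have hd : ((i : ℕ) * k
            + (((j : ℕ) : ZMod n) - ((i : ℕ) : ZMod n) * (k : ZMod n)).val) / k = (i : ℕ) := by
          rw [mul_comm, Nat.mul_add_div hk1,
            Nat.div_eq_of_lt hi, Nat.add_zero]
        rw [hd, Nat.mod_eq_of_lt i.isLt]
      · intro m hm
        simp only
        rw [(hDval m hm).1, (hDval m hm).2, mul_comm, Nat.div_add_mod m k]
    rw [hfilter, hcard, hTcard]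

lemma cyc_eq_ite (hk : k ≤ n) (i l : Fin n) :
    cyc n k i l = if (((l : ℕ) : ZMod n) - ((i : ℕ) : ZMod n) * (k : ZMod n)).val < k
      then 1 else 0 := by
  classical
  by_cases h : (((l : ℕ) : ZMod n) - ((i : ℕ) : ZMod n) * (k : ZMod n)).val < k
  · simp [h, (cyc_eq_one_iff hk i l).2 h]
  · simp only [if_neg h]
    have h1 : ¬ cyc n k i l = 1 := (cyc_eq_one_iff hk i l).not.2 h
    unfold cyc at h1 ⊢
    split_ifs at h1 ⊢ with h2
    · exact absurd rfl h1
    · rfl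

lemma rowSum_eq (hk : k ≤ n) (i j : Fin n) :
    RowSum (cyc n k) i j = ((Finset.range k).filter
      (fun a => ((((i : ℕ) : ZMod n) * (k : ZMod n)).val + a) % n ≤ (j : ℕ))).card := by
  classical
  unfold RowSum
  rw [Finset.sum_congr rfl (fun l _ => cyc_eq_ite hk i l), Finset.sum_boole, Nat.cast_id]
  refine Finset.card_nbij'
    (i := fun l => (((l : ℕ) : ZMod n) - ((i : ℕ) : ZMod n) * (k : ZMod n)).val)
    (j := fun a => (⟨(((i : ℕ) : ZMod n) * (k : ZMod n) + (a : ZMod n)).val,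
      ZMod.val_lt _⟩ : Fin n)) ?_ ?_ ?_ ?_
  · intro l hl
    simp only [Finset.mem_coe, Finset.mem_filter, Finset.mem_Iic] at hl
    simp only [Finset.mem_coe, Finset.mem_filter, Finset.mem_range]
    refine ⟨hl.2, ?_⟩
    have h1 : (((i : ℕ) : ZMod n) * (k : ZMod n)).val
        + (((l : ℕ) : ZMod n) - ((i : ℕ) : ZMod n) * (k : ZMod n)).val
        = (((i : ℕ) : ZMod n) * (k : ZMod n)).val
        + ((((l : ℕ) : ZMod n) - ((i : ℕ) : ZMod n) * (k : ZMod n))).val := rfl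
    rw [h1, ← ZMod.val_add]
    have h2 : ((i : ℕ) : ZMod n) * (k : ZMod n)
        + ((((l : ℕ) : ZMod n) - ((i : ℕ) : ZMod n) * (k : ZMod n))) = ((l : ℕ) : ZMod n) := by
      ring
    rw [h2, ZMod.val_natCast_of_lt l.isLt]
    exact hl.1
  · intro a ha
    simp only [Finset.mem_coe, Finset.mem_filter, Finset.mem_range] at ha
    simp only [Finset.mem_coe, Finset.mem_filter, Finset.mem_Iic]
    constructor
    · show (⟨(((i : ℕ) : ZMod n) * (k : ZMod n) + (a : ZMod n)).val, ZMod.val_lt _⟩ : Fin n) ≤ j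
      rw [Fin.le_def]
      simp only
      rw [ZMod.val_add, ZMod.val_natCast_of_lt (lt_of_lt_of_le ha.1 hk)]
      exact ha.2
    · have h1 : ((((((i : ℕ) : ZMod n) * (k : ZMod n) + (a : ZMod n)).val : ℕ)) : ZMod n)
          = ((i : ℕ) : ZMod n) * (k : ZMod n) + (a : ZMod n) := ZMod.natCast_rightInverse _
      show (((((((i : ℕ) : ZMod n) * (k : ZMod n) + (a : ZMod n)).val : ℕ)) : ZMod n)
        - ((i : ℕ) : ZMod n) * (k : ZMod n)).val < k
      rw [h1]
      have h2 : ((i : ℕ) : ZMod n) * (k : ZMod n) + (a : ZMod n)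
          - ((i : ℕ) : ZMod n) * (k : ZMod n) = (a : ZMod n) := by ring
      rw [h2, ZMod.val_natCast_of_lt (lt_of_lt_of_le ha.1 hk)]
      exact ha.1
  · intro l hl
    apply Fin.ext
    simp only
    have h1 : (((((l : ℕ) : ZMod n) - ((i : ℕ) : ZMod n) * (k : ZMod n)).val : ℕ) : ZMod n)
        = ((l : ℕ) : ZMod n) - ((i : ℕ) : ZMod n) * (k : ZMod n) := ZMod.natCast_rightInverse _
    rw [h1]
    have h2 : ((i : ℕ) : ZMod n) * (k : ZMod n)
        + (((l : ℕ) : ZMod n) - ((i : ℕ) : ZMod n) * (k : ZMod n)) = ((l : ℕ) : ZMod n) := by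
      ring
    rw [h2, ZMod.val_natCast_of_lt l.isLt]
  · intro a ha
    simp only [Finset.mem_coe, Finset.mem_filter, Finset.mem_range] at ha
    have h1 : ((((((i : ℕ) : ZMod n) * (k : ZMod n) + (a : ZMod n)).val : ℕ)) : ZMod n)
        = ((i : ℕ) : ZMod n) * (k : ZMod n) + (a : ZMod n) := ZMod.natCast_rightInverse _
    simp only
    rw [h1]
    have h2 : ((i : ℕ) : ZMod n) * (k : ZMod n) + (a : ZMod n)
        - ((i : ℕ) : ZMod n) * (k : ZMod n) = (a : ZMod n) := by ring
    rw [h2, ZMod.val_natCast_of_lt (lt_of_lt_of_le ha.1 hk)]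

lemma mod_two_n {n x : ℕ} (h1 : n ≤ x) (h2 : x < 2 * n) : x % n = x - n := by
  rw [Nat.mod_eq_sub_mod h1, Nat.mod_eq_of_lt (by omega)]

lemma rowSum_A (hk : k ≤ n) (hk1 : 1 ≤ k) (i j : Fin n)
    (hA : (((j : ℕ) : ZMod n) - ((i : ℕ) : ZMod n) * (k : ZMod n)).val = k - 1) :
    RowSum (cyc n k) i j = min ((j : ℕ) + 1) k := by
  classical
  set s := (((i : ℕ) : ZMod n) * (k : ZMod n)).val with hs_def
  have hs : s < n := ZMod.val_lt _
  have hjval : (j : ℕ) = (s + (k - 1)) % n := by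
    have h1 : ((j : ℕ) : ZMod n) = ((i : ℕ) : ZMod n) * (k : ZMod n)
        + (((j : ℕ) : ZMod n) - ((i : ℕ) : ZMod n) * (k : ZMod n)) := by ring
    have h2 := congrArg ZMod.val h1
    rwa [ZMod.val_natCast_of_lt j.isLt, ZMod.val_add, hA, ← hs_def] at h2
  rw [rowSum_eq hk i j, ← hs_def]
  rcases le_or_gt (s + k) n with hc | hc
  · have hjv : (j : ℕ) = s + (k - 1) := by
      rw [hjval, Nat.mod_eq_of_lt (by omega)]
    have hfil : (Finset.range k).filter (fun a => (s + a) % n ≤ (j : ℕ))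
        = Finset.range k := by
      apply Finset.filter_true_of_mem
      intro a ha
      simp only [Finset.mem_range] at ha
      rw [Nat.mod_eq_of_lt (by omega)]
      omega
    rw [hfil, Finset.card_range]
    omega
  · have hjv : (j : ℕ) = s + (k - 1) - n := by
      rw [hjval, mod_two_n (by omega) (by omega)]
    have hfil : (Finset.range k).filter (fun a => (s + a) % n ≤ (j : ℕ))
        = Finset.Ico (n - s) k := by
      ext a
      simp only [Finset.mem_filter, Finset.mem_range, Finset.mem_Ico]
      constructor
      · rintro ⟨ha, hle⟩
        refine ⟨?_, ha⟩
        by_contra hlt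
        push_neg at hlt
        rw [Nat.mod_eq_of_lt (by omega)] at hle
        omega
      · rintro ⟨h1, h2⟩
        refine ⟨h2, ?_⟩
        rw [mod_two_n (by omega) (by omega)]
        omega
    rw [hfil, Nat.card_Ico]
    omega

lemma rowSum_B (hk : k ≤ n) (hk1 : 1 ≤ k) (i j : Fin n)
    (hB : (((j : ℕ) : ZMod n) - ((i : ℕ) : ZMod n) * (k : ZMod n)).val = n - 1) :
    RowSum (cyc n k) i j = (j : ℕ) + 1 + k - n := by
  classical
  set s := (((i : ℕ) : ZMod n) * (k : ZMod n)).val with hs_def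
  have hs : s < n := ZMod.val_lt _
  have hn1 : 1 ≤ n := Nat.one_le_iff_ne_zero.2 (NeZero.ne n)
  have hjval : (j : ℕ) = (s + (n - 1)) % n := by
    have h1 : ((j : ℕ) : ZMod n) = ((i : ℕ) : ZMod n) * (k : ZMod n)
        + (((j : ℕ) : ZMod n) - ((i : ℕ) : ZMod n) * (k : ZMod n)) := by ring
    have h2 := congrArg ZMod.val h1
    rwa [ZMod.val_natCast_of_lt j.isLt, ZMod.val_add, hB, ← hs_def] at h2
  rw [rowSum_eq hk i j, ← hs_def]
  rcases Nat.eq_zero_or_pos s with hs0 | hs0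
  · have hjv : (j : ℕ) = n - 1 := by
      rw [hjval, hs0, Nat.zero_add, Nat.mod_eq_of_lt (by omega)]
    have hfil : (Finset.range k).filter (fun a => (s + a) % n ≤ (j : ℕ))
        = Finset.range k := by
      apply Finset.filter_true_of_mem
      intro a ha
      simp only [Finset.mem_range] at ha
      rw [hs0, Nat.zero_add, Nat.mod_eq_of_lt (by omega)]
      omega
    rw [hfil, Finset.card_range]
    omega
  · have hjv : (j : ℕ) = s - 1 := by
      rw [hjval, mod_two_n (by omega) (by omega)]
      omega
    have hfil : (Finset.range k).filter (fun a => (s + a) % n ≤ (j : ℕ))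
        = Finset.Ico (n - s) k := by
      ext a
      simp only [Finset.mem_filter, Finset.mem_range, Finset.mem_Ico]
      constructor
      · rintro ⟨ha, hle⟩
        refine ⟨?_, ha⟩
        by_contra hlt
        push_neg at hlt
        rw [Nat.mod_eq_of_lt (by omega)] at hle
        omega
      · rintro ⟨h1, h2⟩
        refine ⟨h2, ?_⟩
        rw [mod_two_n (by omega) (by omega)]
        omega
    rw [hfil, Nat.card_Ico]
    omega

end Aux

/-- for all `n ≥ 1` and `0 ≤ k ≤ n`, the cyclic `(n,k)`-matrix is
`k`-uniform and optimal. -/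
theorem stmt_13 (n k : ℕ) (hn : 1 ≤ n) (hk : k ≤ n) :
    IsUniform k (cyc n k) ∧ Optimal (cyc n k) := by
  haveI : NeZero n := ⟨by omega⟩
  have huni : IsUniform k (cyc n k) := ⟨cyc_row_card hk, cyc_col_card hk⟩
  refine ⟨huni, ⟨k, huni⟩, ?_⟩
  intro jj hj
  have hn2 : 2 ≤ n := by omega
  rcases Nat.eq_zero_or_pos k with hk0 | hk1
  · -- `k = 0`: the matrix is all zeroes and everything is trivial
    subst hk0
    refine ⟨id, ?_, ?_⟩
    · have hempty : ∀ l : Fin n, {i : Fin n | cyc n 0 i l = 1} = ∅ := by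
        intro l
        ext i
        simp only [Set.mem_setOf_eq, Set.mem_empty_iff_false, iff_false]
        rw [cyc_eq_one_iff (Nat.zero_le n) i l]
        omega
      unfold IsAssignment
      rw [hempty, hempty]
      exact Set.bijOn_empty id
    · intro i _
      exact le_refl _
  · -- `k ≥ 1`
    set jc : Fin n := ⟨jj, Nat.lt_of_succ_lt hj⟩ with hjc
    set jc' : Fin n := ⟨jj + 1, hj⟩ with hjc'
    set D : Fin n → ℕ :=
      fun i => (((jj : ℕ) : ZMod n) - ((i : ℕ) : ZMod n) * (k : ZMod n)).val with hD
    set D' : Fin n → ℕ :=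
      fun i => (((jj + 1 : ℕ) : ZMod n) - ((i : ℕ) : ZMod n) * (k : ZMod n)).val with hD'
    have hDlt : ∀ i, D i < n := fun i => ZMod.val_lt _
    have hcast_inj : ∀ i i' : Fin n, ((i : ℕ) : ZMod n) = ((i' : ℕ) : ZMod n) → i = i' := by
      intro i i' h
      have := congrArg ZMod.val h
      rwa [ZMod.val_natCast_of_lt i.isLt, ZMod.val_natCast_of_lt i'.isLt, ← Fin.ext_iff] at this
    have hmemA : ∀ i, cyc n k i jc = 1 ↔ D i < k := by
      intro i
      rw [cyc_eq_one_iff hk i jc]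
    have hmemB : ∀ i, cyc n k i jc' = 1 ↔ D' i < k := by
      intro i
      rw [cyc_eq_one_iff hk i jc']
    have hD'eq : ∀ i, D' i = (D i + 1) % n := by
      intro i
      have h1 : ((jj + 1 : ℕ) : ZMod n) - ((i : ℕ) : ZMod n) * (k : ZMod n)
          = (((jj : ℕ) : ZMod n) - ((i : ℕ) : ZMod n) * (k : ZMod n)) + ((1 : ℕ) : ZMod n) := by
        push_cast
        ring
      rw [hD', hD]
      simp only
      rw [h1, ZMod.val_add, ZMod.val_natCast_of_lt (by omega : 1 < n)]
    have hneg1 : ((n - 1 : ℕ) : ZMod n) = -1 := by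
      have : ((n - 1 : ℕ) : ZMod n) = ((n : ℕ) : ZMod n) - 1 := by
        push_cast [Nat.cast_sub hn]
        ring
      rw [this, ZMod.natCast_self]
      ring
    have hshift : ∀ i : Fin n, D i = k - 1 →
        D ⟨((i : ℕ) + 1) % n, Nat.mod_lt _ (by omega)⟩ = n - 1 := by
      intro i hi
      have hx : ((jj : ℕ) : ZMod n) - ((i : ℕ) : ZMod n) * (k : ZMod n)
          = ((k - 1 : ℕ) : ZMod n) := by
        have h0 : (((((jj : ℕ) : ZMod n) - ((i : ℕ) : ZMod n) * (k : ZMod n)).val : ℕ) : ZMod n)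
            = ((jj : ℕ) : ZMod n) - ((i : ℕ) : ZMod n) * (k : ZMod n) :=
          ZMod.natCast_rightInverse _
        rw [← h0]
        rw [hD] at hi
        simp only at hi
        rw [hi]
      have hcast : (((((i : ℕ) + 1) % n : ℕ)) : ZMod n) = ((i : ℕ) : ZMod n) + 1 := by
        rw [ZMod.natCast_mod]
        push_cast
        ring
      rw [hD]
      simp only [hcast]
      have h2 : ((jj : ℕ) : ZMod n) - (((i : ℕ) : ZMod n) + 1) * (k : ZMod n)
          = ((n - 1 : ℕ) : ZMod n) := by
        have hkc : ((k : ℕ) : ZMod n) = ((k - 1 : ℕ) : ZMod n) + 1 := by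
          conv_lhs => rw [show k = (k - 1) + 1 by omega]
          push_cast
          ring
        calc ((jj : ℕ) : ZMod n) - (((i : ℕ) : ZMod n) + 1) * (k : ZMod n)
            = (((jj : ℕ) : ZMod n) - ((i : ℕ) : ZMod n) * (k : ZMod n)) - (k : ZMod n) := by ring
          _ = ((k - 1 : ℕ) : ZMod n) - (((k - 1 : ℕ) : ZMod n) + 1) := by rw [hx, hkc]
          _ = -1 := by ring
          _ = ((n - 1 : ℕ) : ZMod n) := hneg1.symm
      rw [h2, ZMod.val_natCast_of_lt (by omega : n - 1 < n)]
    have hunshift : ∀ i' : Fin n, D i' = n - 1 →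
        D ⟨((i' : ℕ) + (n - 1)) % n, Nat.mod_lt _ (by omega)⟩ = k - 1 := by
      intro i' hi'
      have hx : ((jj : ℕ) : ZMod n) - ((i' : ℕ) : ZMod n) * (k : ZMod n) = -1 := by
        have h0 : (((((jj : ℕ) : ZMod n) - ((i' : ℕ) : ZMod n) * (k : ZMod n)).val : ℕ) : ZMod n)
            = ((jj : ℕ) : ZMod n) - ((i' : ℕ) : ZMod n) * (k : ZMod n) :=
          ZMod.natCast_rightInverse _
        rw [← h0]
        rw [hD] at hi'
        simp only at hi'
        rw [hi', hneg1]
      have hcast : (((((i' : ℕ) + (n - 1)) % n : ℕ)) : ZMod n) = ((i' : ℕ) : ZMod n) - 1 := by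
        rw [ZMod.natCast_mod, Nat.cast_add, hneg1]
        ring
      rw [hD]
      simp only [hcast]
      have h2 : ((jj : ℕ) : ZMod n) - (((i' : ℕ) : ZMod n) - 1) * (k : ZMod n)
          = ((k - 1 : ℕ) : ZMod n) := by
        have hkc : ((k - 1 : ℕ) : ZMod n) = (k : ZMod n) - 1 := by
          rw [Nat.cast_sub hk1]
          push_cast
          ring
        calc ((jj : ℕ) : ZMod n) - (((i' : ℕ) : ZMod n) - 1) * (k : ZMod n)
            = (((jj : ℕ) : ZMod n) - ((i' : ℕ) : ZMod n) * (k : ZMod n)) + (k : ZMod n) := by ring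
          _ = -1 + (k : ZMod n) := by rw [hx]
          _ = (k : ZMod n) - 1 := by ring
          _ = ((k - 1 : ℕ) : ZMod n) := hkc.symm
      rw [h2, ZMod.val_natCast_of_lt (by omega : k - 1 < n)]
    -- the assignment mapping
    refine ⟨fun i => if D i = k - 1 then ⟨((i : ℕ) + 1) % n, Nat.mod_lt _ (by omega)⟩ else i,
      ⟨?_, ?_, ?_⟩, ?_⟩
    · -- MapsTo
      intro i hi
      simp only [Set.mem_setOf_eq] at hi ⊢
      rw [hmemA] at hi
      rw [hmemB, hD'eq]
      by_cases hii : D i = k - 1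
      · rw [if_pos hii, hshift i hii]
        have : (n - 1 + 1) % n = 0 := by
          have : n - 1 + 1 = n := by omega
          rw [this, Nat.mod_self]
        rw [this]
        omega
      · rw [if_neg hii, Nat.mod_eq_of_lt (by omega)]
        omega
    · -- InjOn
      intro i hi i2 hi2 heq
      simp only [Set.mem_setOf_eq] at hi hi2
      rw [hmemA] at hi hi2
      have heq : (if D i = k - 1 then (⟨((i : ℕ) + 1) % n, Nat.mod_lt _ (by omega)⟩ : Fin n)
          else i) = (if D i2 = k - 1 then (⟨((i2 : ℕ) + 1) % n, Nat.mod_lt _ (by omega)⟩ : Fin n)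
          else i2) := heq
      by_cases h1 : D i = k - 1 <;> by_cases h2 : D i2 = k - 1
      · rw [if_pos h1, if_pos h2] at heq
        have hv : ((i : ℕ) + 1) % n = ((i2 : ℕ) + 1) % n := congrArg Fin.val heq
        apply hcast_inj
        have := congrArg (fun m : ℕ => ((m : ℕ) : ZMod n)) hv
        simp only [ZMod.natCast_mod] at this
        push_cast at this
        exact add_right_cancel this
      · rw [if_pos h1, if_neg h2] at heq
        have := hshift i h1
        rw [heq] at this
        omega
      · rw [if_neg h1, if_pos h2] at heq
        have := hshift i2 h2
        rw [← heq] at this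
        omega
      · rwa [if_neg h1, if_neg h2] at heq
    · -- SurjOn
      intro i' hi'
      simp only [Set.mem_setOf_eq] at hi'
      rw [hmemB, hD'eq] at hi'
      by_cases hD1 : D i' = n - 1
      · refine ⟨⟨((i' : ℕ) + (n - 1)) % n, Nat.mod_lt _ (by omega)⟩, ?_, ?_⟩
        · simp only [Set.mem_setOf_eq]
          rw [hmemA, hunshift i' hD1]
          omega
        · show (if D (⟨((i' : ℕ) + (n - 1)) % n, Nat.mod_lt _ (by omega)⟩ : Fin n) = k - 1
            then (⟨((((i' : ℕ) + (n - 1)) % n : ℕ) + 1) % n, Nat.mod_lt _ (by omega)⟩ : Fin n)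
            else ⟨((i' : ℕ) + (n - 1)) % n, Nat.mod_lt _ (by omega)⟩) = i'
          rw [if_pos (hunshift i' hD1)]
          apply Fin.ext
          simp only
          have h3 : (i' : ℕ) + (n - 1) + 1 = (i' : ℕ) + n := by omega
          rw [Nat.mod_add_mod, h3, Nat.add_mod_right, Nat.mod_eq_of_lt i'.isLt]
      · refine ⟨i', ?_, ?_⟩
        · simp only [Set.mem_setOf_eq]
          rw [hmemA]
          have : (D i' + 1) % n = D i' + 1 := Nat.mod_eq_of_lt (by have := hDlt i'; omega)
          omega
        · have hne : D i' ≠ k - 1 := by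
            intro hcon
            have : (D i' + 1) % n = D i' + 1 := Nat.mod_eq_of_lt (by have := hDlt i'; omega)
            omega
          show (if D i' = k - 1 then (⟨((i' : ℕ) + 1) % n, Nat.mod_lt _ (by omega)⟩ : Fin n)
            else i') = i'
          rw [if_neg hne]
    · -- Cond2
      intro i hi
      rw [hmemA] at hi
      show RowSum (cyc n k) (if D i = k - 1
        then (⟨((i : ℕ) + 1) % n, Nat.mod_lt _ (by omega)⟩ : Fin n) else i) jc
        ≤ RowSum (cyc n k) i jc
      by_cases hii : D i = k - 1
      · rw [if_pos hii]
        have hB := rowSum_B hk hk1 ⟨((i : ℕ) + 1) % n, Nat.mod_lt _ (by omega)⟩ jc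
          (by rw [hD] at hshift; exact hshift i hii)
        have hA := rowSum_A hk hk1 i jc (by rw [hD] at hii; exact hii)
        rw [hA, hB]
        have hjcv : (jc : ℕ) = jj := rfl
        rw [hjcv]
        omega
      · rw [if_neg hii]
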